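/- Assume r > 1/2 (equivalently n ≥ m) and 0 < d < r. Then the eigenvalue system (EV) admits a unique positive eigenvalue λ (i.e. a unique λ > 0 for which there exists x ∈ ℝ^{n+m} with (λ, x) a solution of (EV)), given by λ = min( d/(1+ρ), 1/4, (r−d)/(2r−1+ρ) ). -/

import Mathlib

open Finset

/-- The eigenvalue system (EV) for the 2D-traffic dynamics: `lam` is the
additive eigenvalue and `x : ℕ → ℝ` carries the coordinates `x 1, …, x (n+m)`. -/
def EVsol (n m : ℕ) (a : ℕ → ℝ) (lam : ℝ) (x : ℕ → ℝ) : Prop :=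
  (∀ i : ℕ, ((2 ≤ i ∧ i ≤ n - 1) ∨ (n + 2 ≤ i ∧ i ≤ n + m - 1)) →
      lam + x i = min (a (i - 1) + x (i - 1)) ((1 - a i) + x (i + 1))) ∧
  lam + x n = min ((1 - (a n + a (n + m))) + x 1 + x (n + 1) - lam - x (n + m))
      (a (n - 1) + x (n - 1)) ∧
  lam + x (n + m) = min ((1 - (a n + a (n + m))) + x 1 + x (n + 1) - x n)
      (a (n + m - 1) + x (n + m - 1)) ∧
  lam + x 1 = min (a n + (x n + x (n + m)) / 2) ((1 - a 1) + x 2) ∧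
  lam + x (n + 1) = min (a (n + m) + (x n + x (n + m)) / 2) ((1 - a (n + 1)) + x (n + 2))

lemma sum_Icc_cons (f : ℕ → ℝ) {a b : ℕ} (h : a ≤ b) :
    ∑ i ∈ Icc a b, f i = f a + ∑ i ∈ Icc (a+1) b, f i := by
  rw [← Finset.insert_Icc_add_one_left_eq_Icc h, Finset.sum_insert (by simp)]

lemma key (n m : ℕ) (hn : 2 ≤ n) (hm : 2 ≤ m) (a : ℕ → ℝ) (lam : ℝ)
    (c : ℕ → ℝ) (q q' : ℝ)
    (Hint : ∀ i : ℕ, ((2 ≤ i ∧ i ≤ n - 1) ∨ (n + 2 ≤ i ∧ i ≤ n + m - 1)) →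
      lam = min (1 - c (i-1)) (c i))
    (H1 : lam = min (a n - q) (c 1))
    (Hn1 : lam = min (a (n+m) - q') (c (n+1)))
    (Hn : lam = min ((1 - (a n + a (n+m))) + (q + q') - lam) (1 - c (n-1)))
    (Hnm : lam = min ((1 - (a n + a (n+m))) + (q + q')) (1 - c (n+m-1)))
    (Hw : q + q' = (∑ i ∈ Icc 1 (n-1), (1 - a i - c i)) + ∑ i ∈ Icc (n+1) (n+m-1), (1 - a i - c i)) :
    ∃ x : ℕ → ℝ, EVsol n m a lam x := by
  classical
  set x : ℕ → ℝ := fun i => if i ≤ n then ∑ j ∈ Icc i (n-1), (1 - a j - c j)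
      else 2 * (∑ j ∈ Icc 1 (n-1), (1 - a j - c j)) - 2*q
           + ∑ j ∈ Icc i (n+m-1), (1 - a j - c j) with hxdef
  have hxn : x n = 0 := by
    simp only [hxdef, if_pos le_rfl]
    rw [Finset.Icc_eq_empty (by omega), Finset.sum_empty]
  have hx1 : x 1 = ∑ j ∈ Icc 1 (n-1), (1 - a j - c j) := by
    simp only [hxdef, if_pos (by omega : 1 ≤ n)]
  have hxnm : x (n+m) = 2 * x 1 - 2*q := by
    simp only [hxdef, if_neg (by omega : ¬ (n+m ≤ n)), if_pos (by omega : 1 ≤ n)]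
    rw [Finset.Icc_eq_empty (show ¬ (n+m ≤ n+m-1) by omega), Finset.sum_empty]
    ring
  have hxn1 : x (n+1) = x 1 - q + q' := by
    simp only [hxdef, if_neg (by omega : ¬ (n+1 ≤ n)), if_pos (by omega : 1 ≤ n)]
    have := Hw
    linarith
  have hs : (x n + x (n+m))/2 = x 1 - q := by rw [hxn, hxnm]; ring
  have hstep1 : ∀ i : ℕ, 2 ≤ i → i ≤ n → x (i-1) = (1 - a (i-1) - c (i-1)) + x i := by
    intro i h2 hle
    simp only [hxdef, if_pos (show i - 1 ≤ n by omega), if_pos hle]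
    rw [sum_Icc_cons _ (show i - 1 ≤ n - 1 by omega), show i - 1 + 1 = i by omega]
  have hstep2 : ∀ i : ℕ, n+2 ≤ i → i ≤ n+m → x (i-1) = (1 - a (i-1) - c (i-1)) + x i := by
    intro i h2 hle
    simp only [hxdef, if_neg (show ¬ (i - 1 ≤ n) by omega), if_neg (show ¬ (i ≤ n) by omega)]
    rw [sum_Icc_cons _ (show i - 1 ≤ n + m - 1 by omega), show i - 1 + 1 = i by omega]
    ring
  refine ⟨x, ?_, ?_, ?_, ?_, ?_⟩
  · rintro i (⟨hi1, hi2⟩ | ⟨hi1, hi2⟩)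
    · have e1 : a (i-1) + x (i-1) = (1 - c (i-1)) + x i := by
        rw [hstep1 i hi1 (by omega)]; ring
      have h2 := hstep1 (i+1) (by omega) (by omega)
      simp only [Nat.add_sub_cancel] at h2
      have e2 : (1 - a i) + x (i+1) = c i + x i := by rw [h2]; ring
      rw [e1, e2, min_add_add_right, ← Hint i (Or.inl ⟨hi1, hi2⟩)]
    · have e1 : a (i-1) + x (i-1) = (1 - c (i-1)) + x i := by
        rw [hstep2 i hi1 (by omega)]; ring
      have h2 := hstep2 (i+1) (by omega) (by omega)
      simp only [Nat.add_sub_cancel] at h2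
      have e2 : (1 - a i) + x (i+1) = c i + x i := by rw [h2]; ring
      rw [e1, e2, min_add_add_right, ← Hint i (Or.inr ⟨hi1, hi2⟩)]
  · have b1 : (1 - (a n + a (n+m))) + x 1 + x (n+1) - lam - x (n+m)
        = ((1 - (a n + a (n+m))) + (q + q') - lam) + x n := by
      rw [hxn, hxn1, hxnm]; ring
    have b2 : a (n-1) + x (n-1) = (1 - c (n-1)) + x n := by
      rw [hstep1 n hn le_rfl]; ring
    rw [b1, b2, min_add_add_right, ← Hn]
  · have b1 : (1 - (a n + a (n+m))) + x 1 + x (n+1) - x n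
        = ((1 - (a n + a (n+m))) + (q + q')) + x (n+m) := by
      rw [hxn, hxn1, hxnm]; ring
    have b2 : a (n+m-1) + x (n+m-1) = (1 - c (n+m-1)) + x (n+m) := by
      rw [hstep2 (n+m) (by omega) le_rfl]; ring
    rw [b1, b2, min_add_add_right, ← Hnm]
  · have b1 : a n + (x n + x (n+m))/2 = (a n - q) + x 1 := by rw [hs]; ring
    have h2 := hstep1 2 le_rfl (by omega)
    norm_num at h2
    have b2 : (1 - a 1) + x 2 = c 1 + x 1 := by rw [h2]; ring
    rw [b1, b2, min_add_add_right, ← H1]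
  · have b1 : a (n+m) + (x n + x (n+m))/2 = (a (n+m) - q') + x (n+1) := by
      rw [hs, hxn1]; ring
    have h2 := hstep2 (n+2) le_rfl (by omega)
    simp only [show n+2-1 = n+1 from rfl] at h2
    have b2 : (1 - a (n+1)) + x (n+2) = c (n+1) + x (n+1) := by rw [h2]; ring
    rw [b1, b2, min_add_add_right, ← Hn1]

lemma tele (x : ℕ → ℝ) (j b : ℕ) (h : j ≤ b + 1) :
    ∑ i ∈ Icc j b, (x (i+1) - x i) = x (b+1) - x j := by
  rw [← Finset.Ico_add_one_right_eq_Icc, Finset.sum_Ico_eq_sum_range]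
  have h1 := Finset.sum_range_sub (fun t => x (j + t)) (b + 1 - j)
  simp only [add_zero] at h1
  have h2 : j + (b + 1 - j) = b + 1 := by omega
  rw [h2] at h1
  rw [← h1]
  exact Finset.sum_congr rfl fun i _ => rfl

lemma split4 (f : ℕ → ℝ) (n m : ℕ) (hn : 2 ≤ n) (hm : 2 ≤ m) :
    ∑ i ∈ Icc 1 (n+m), f i
      = ((∑ i ∈ Icc 1 (n-1), f i) + f n) + ((∑ i ∈ Icc (n+1) (n+m-1), f i) + f (n+m)) := by
  have e0 : ∑ i ∈ Icc 1 (n+m), f i = ∑ i ∈ Ico 1 (n+m+1), f i := by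
    rw [Finset.Ico_add_one_right_eq_Icc]
  have c1 : (∑ i ∈ Ico 1 n, f i) + ∑ i ∈ Ico n (n+m+1), f i = ∑ i ∈ Ico 1 (n+m+1), f i :=
    Finset.sum_Ico_consecutive f (by omega) (by omega)
  have c2 : (∑ i ∈ Ico n (n+1), f i) + ∑ i ∈ Ico (n+1) (n+m+1), f i = ∑ i ∈ Ico n (n+m+1), f i :=
    Finset.sum_Ico_consecutive f (by omega) (by omega)
  have c3 : (∑ i ∈ Ico (n+1) (n+m), f i) + ∑ i ∈ Ico (n+m) (n+m+1), f i = ∑ i ∈ Ico (n+1) (n+m+1), f i :=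
    Finset.sum_Ico_consecutive f (by omega) (by omega)
  have e1 : Ico 1 n = Icc 1 (n-1) := by rw [← Finset.Ico_add_one_right_eq_Icc]; congr 1; omega
  have e3 : Ico (n+1) (n+m) = Icc (n+1) (n+m-1) := by
    rw [← Finset.Ico_add_one_right_eq_Icc]; congr 1; omega
  have e2 : ∑ i ∈ Ico n (n+1), f i = f n := by simp
  have e4 : ∑ i ∈ Ico (n+m) (n+m+1), f i = f (n+m) := by simp
  rw [e0, ← c1, ← c2, ← c3, e1, e2, e3, e4]; ring

lemma cardIcc1 (n : ℕ) (hn : 1 ≤ n) : (((Icc 1 (n-1)).card : ℕ) : ℝ) = (n:ℝ) - 1 := by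
  have h : (Icc 1 (n-1)).card = n - 1 := by rw [Nat.card_Icc]; omega
  rw [h, Nat.cast_sub (by omega : 1 ≤ n)]
  norm_num

lemma cardIcc2 (n m : ℕ) (hm : 1 ≤ m) : (((Icc (n+1) (n+m-1)).card : ℕ) : ℝ) = (m:ℝ) - 1 := by
  have h : (Icc (n+1) (n+m-1)).card = m - 1 := by rw [Nat.card_Icc]; omega
  rw [h, Nat.cast_sub (by omega : 1 ≤ m)]
  norm_num

private lemma mshift {lam xi u v u' v' : ℝ} (h : lam + xi = min u v)
    (hu : u = u' + xi) (hv : v = v' + xi) : lam = min u' v' := by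
  rw [hu, hv, min_add_add_right] at h; linarith

lemma extract (n m : ℕ) (hn : 2 ≤ n) (hm : 2 ≤ m) (a : ℕ → ℝ) (lam : ℝ) (x : ℕ → ℝ)
    (hev : EVsol n m a lam x) :
    ∃ c : ℕ → ℝ, ∃ q q' : ℝ,
      (∀ i : ℕ, ((2 ≤ i ∧ i ≤ n - 1) ∨ (n + 2 ≤ i ∧ i ≤ n + m - 1)) →
        lam = min (1 - c (i-1)) (c i)) ∧
      lam = min (a n - q) (c 1) ∧
      lam = min (a (n+m) - q') (c (n+1)) ∧
      lam = min ((1 - (a n + a (n+m))) + (q + q') - lam) (1 - c (n-1)) ∧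
      lam = min ((1 - (a n + a (n+m))) + (q + q')) (1 - c (n+m-1)) ∧
      q + q' = (∑ i ∈ Icc 1 (n-1), (1 - a i - c i)) + ∑ i ∈ Icc (n+1) (n+m-1), (1 - a i - c i) := by
  obtain ⟨hint, heqn, heqnm, heq1, heqn1⟩ := hev
  refine ⟨fun i => 1 - a i + (x (i+1) - x i),
    x 1 - (x n + x (n+m))/2, x (n+1) - (x n + x (n+m))/2, ?_, ?_, ?_, ?_, ?_, ?_⟩
  · intro i hi
    refine mshift (hint i hi) ?_ ?_
    · simp only []
      rw [show i-1+1 = i by rcases hi with ⟨h1,_⟩|⟨h1,_⟩ <;> omega]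
      ring
    · simp only []; ring
  · refine mshift heq1 ?_ ?_
    · ring
    · simp only []; ring
  · refine mshift heqn1 ?_ ?_
    · ring
    · simp only []; ring
  · refine mshift heqn ?_ ?_
    · ring
    · simp only []
      rw [show n-1+1 = n by omega]
      ring
  · refine mshift heqnm ?_ ?_
    · ring
    · simp only []
      rw [show n+m-1+1 = n+m by omega]
      ring
  · have e1 : ∀ S : Finset ℕ,
        ∑ i ∈ S, (1 - a i - (1 - a i + (x (i+1) - x i))) = -∑ i ∈ S, (x (i+1) - x i) := by
      intro S
      rw [← Finset.sum_neg_distrib]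
      exact Finset.sum_congr rfl fun i _ => by ring
    simp only []
    rw [e1, e1, tele x 1 (n-1) (by omega), tele x (n+1) (n+m-1) (by omega),
      show n-1+1 = n by omega, show n+m-1+1 = n+m by omega]
    ring

lemma arith1 (nr lam : ℝ) (hn2 : 2 ≤ nr) (hq : lam ≤ 1/4) : (2*nr+2)*lam ≤ nr := by
  nlinarith [mul_le_mul_of_nonneg_left hq (by linarith : (0:ℝ) ≤ 2*nr+2)]

lemma uniq (n m : ℕ) (hn : 2 ≤ n) (hm : 2 ≤ m) (hmn : m ≤ n) (a : ℕ → ℝ) (lam : ℝ)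
    (hpos : 0 < lam)
    (c : ℕ → ℝ) (q q' : ℝ)
    (Hint : ∀ i : ℕ, ((2 ≤ i ∧ i ≤ n - 1) ∨ (n + 2 ≤ i ∧ i ≤ n + m - 1)) →
      lam = min (1 - c (i-1)) (c i))
    (H1 : lam = min (a n - q) (c 1))
    (Hn1 : lam = min (a (n+m) - q') (c (n+1)))
    (Hn : lam = min ((1 - (a n + a (n+m))) + (q + q') - lam) (1 - c (n-1)))
    (Hnm : lam = min ((1 - (a n + a (n+m))) + (q + q')) (1 - c (n+m-1)))
    (Hw : q + q' = (∑ i ∈ Icc 1 (n-1), (1 - a i - c i)) + ∑ i ∈ Icc (n+1) (n+m-1), (1 - a i - c i)) :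
    lam = min ((∑ i ∈ Icc 1 (n+m), a i) / ((n:ℝ)+(m:ℝ)))
      (min (1/4) (((n:ℝ) - ∑ i ∈ Icc 1 (n+m), a i) / ((n:ℝ) - (m:ℝ) + 2))) := by
  set S := ∑ i ∈ Icc 1 (n+m), a i with hS
  set A1 := ∑ i ∈ Icc 1 (n-1), a i with hA1
  set A2 := ∑ i ∈ Icc (n+1) (n+m-1), a i with hA2
  set C1 := ∑ i ∈ Icc 1 (n-1), c i with hC1
  set C2 := ∑ i ∈ Icc (n+1) (n+m-1), c i with hC2
  have hSsplit : S = (A1 + a n) + (A2 + a (n+m)) := split4 a n m hn hm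
  have card1 : ((Icc 1 (n-1)).card : ℝ) = (n:ℝ) - 1 := by
    have h : (Icc 1 (n-1)).card = n - 1 := by rw [Nat.card_Icc]; omega
    rw [h, Nat.cast_sub (by omega : 1 ≤ n)]
    norm_num
  have card2 : ((Icc (n+1) (n+m-1)).card : ℝ) = (m:ℝ) - 1 := by
    have h : (Icc (n+1) (n+m-1)).card = m - 1 := by rw [Nat.card_Icc]; omega
    rw [h, Nat.cast_sub (by omega : 1 ≤ m)]
    norm_num
  have hw' : q + q' = (((n:ℝ)-1) - A1 - C1) + (((m:ℝ)-1) - A2 - C2) := by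
    rw [Hw]
    have e : ∀ s : Finset ℕ, ∑ i ∈ s, (1 - a i - c i)
        = (s.card : ℝ) - (∑ i ∈ s, a i) - ∑ i ∈ s, c i := by
      intro s
      rw [Finset.sum_sub_distrib, Finset.sum_sub_distrib, Finset.sum_const, nsmul_eq_mul, mul_one]
    rw [e, e, card1, card2]
  -- basic bounds
  have l1 : lam ≤ a n - q := H1.le.trans (min_le_left _ _)
  have l2 : lam ≤ a (n+m) - q' := Hn1.le.trans (min_le_left _ _)
  have l3 : lam ≤ (1 - (a n + a (n+m))) + (q + q') - lam := Hn.le.trans (min_le_left _ _)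
  have hquarter : lam ≤ 1/4 := by linarith
  have hhalf : lam < 1/2 := by linarith
  -- c (n+m-1) = 1 - lam
  have hbase : c (n+m-1) = 1 - lam := by
    rcases min_cases ((1 - (a n + a (n+m))) + (q + q')) (1 - c (n+m-1)) with ⟨he, _⟩ | ⟨he, _⟩
    · rw [he] at Hnm; linarith
    · rw [he] at Hnm; linarith
  -- all of road 2
  have hc2aux : ∀ k : ℕ, k ≤ m - 2 → c (n+m-1-k) = 1 - lam := by
    intro k
    induction k with
    | zero => intro _; simpa using hbase
    | succ k ih =>
      intro hk
      have hik : c (n+m-1-k) = 1 - lam := ih (by omega)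
      have hnode := Hint (n+m-1-(k+1)+1) (Or.inr ⟨by omega, by omega⟩)
      rw [show n+m-1-(k+1)+1-1 = n+m-1-(k+1) by omega,
          show n+m-1-(k+1)+1 = n+m-1-k by omega, hik] at hnode
      rcases min_cases (1 - c (n+m-1-(k+1))) (1 - lam) with ⟨he, _⟩ | ⟨he, _⟩
      · rw [he] at hnode; linarith
      · rw [he] at hnode; linarith
  have hc2 : ∀ i : ℕ, n+1 ≤ i → i ≤ n+m-1 → c i = 1 - lam := by
    intro i h1 h2
    have := hc2aux (n+m-1-i) (by omega)
    rwa [show n+m-1-(n+m-1-i) = i by omega] at this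
  have hcn1 : c (n+1) = 1 - lam := hc2 (n+1) le_rfl (by omega)
  have hq' : a (n+m) - q' = lam := by
    rcases min_cases (a (n+m) - q') (c (n+1)) with ⟨he, _⟩ | ⟨he, _⟩
    · rw [he] at Hn1; linarith
    · rw [he, hcn1] at Hn1; linarith
  have hC2val : C2 = ((m:ℝ)-1) * (1-lam) := by
    have e : ∑ i ∈ Icc (n+1) (n+m-1), c i = ∑ _i ∈ Icc (n+1) (n+m-1), (1-lam) :=
      Finset.sum_congr rfl fun i hi => by
        rw [Finset.mem_Icc] at hi; exact hc2 i hi.1 hi.2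
    rw [hC2, e, Finset.sum_const, nsmul_eq_mul, card2]
  -- road-1 bounds
  have hclb : ∀ i : ℕ, 1 ≤ i → i ≤ n-1 → lam ≤ c i := by
    intro i h1 h2
    rcases eq_or_lt_of_le h1 with he | hlt
    · rw [← he]; exact H1.le.trans (min_le_right _ _)
    · exact (Hint i (Or.inl ⟨by omega, h2⟩)).le.trans (min_le_right _ _)
  have hcub : ∀ i : ℕ, 1 ≤ i → i ≤ n-1 → c i ≤ 1 - lam := by
    intro i h1 h2
    rcases eq_or_lt_of_le h2 with he | hlt
    · have := Hn.le.trans (min_le_right _ _)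
      rw [← he] at this; linarith
    · have h3 := (Hint (i+1) (Or.inl ⟨by omega, by omega⟩)).le.trans (min_le_left _ _)
      rw [show i+1-1 = i by omega] at h3
      linarith
  -- positivity facts
  have hNpos : (0:ℝ) < (n:ℝ) + (m:ℝ) := by positivity
  have hn2 : (2:ℝ) ≤ (n:ℝ) := by exact_mod_cast hn
  have hm2 : (2:ℝ) ≤ (m:ℝ) := by exact_mod_cast hm
  have hmn' : (m:ℝ) ≤ (n:ℝ) := by exact_mod_cast hmn
  have hDpos : (0:ℝ) < (n:ℝ) - (m:ℝ) + 2 := by linarith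
  have key4 : (2*(n:ℝ)+2)*lam ≤ (2*(n:ℝ)+2)*(1/4) :=
    mul_le_mul_of_nonneg_left hquarter (by positivity)
  -- main case split
  by_cases hall : ∀ i : ℕ, 1 ≤ i → i ≤ n-1 → c i = 1 - lam
  · -- Case A : lam = S / (n+m)
    have hq : a n - q = lam := by
      have hc1 : c 1 = 1 - lam := hall 1 le_rfl (by omega)
      rcases min_cases (a n - q) (c 1) with ⟨he, _⟩ | ⟨he, _⟩
      · rw [he] at H1; linarith
      · rw [he, hc1] at H1; linarith
    have hC1val : C1 = ((n:ℝ)-1) * (1-lam) := by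
      have e : ∑ i ∈ Icc 1 (n-1), c i = ∑ _i ∈ Icc 1 (n-1), (1-lam) :=
        Finset.sum_congr rfl fun i hi => by
          rw [Finset.mem_Icc] at hi; exact hall i hi.1 hi.2
      rw [hC1, e, Finset.sum_const, nsmul_eq_mul, card1]
    rw [hC1val, hC2val] at hw'
    have hSval : S = ((n:ℝ)+(m:ℝ)) * lam := by
      linear_combination hSsplit + hw' + hq + hq'
    have e1 : S / ((n:ℝ)+(m:ℝ)) = lam := by
      rw [hSval]; field_simp
    have e2 : lam ≤ ((n:ℝ) - S) / ((n:ℝ) - (m:ℝ) + 2) := by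
      rw [le_div_iff₀ hDpos, hSval]
      have h := arith1 (n:ℝ) lam hn2 hquarter
      linarith only [h]
    rw [e1, min_eq_left (le_min hquarter e2)]
  · -- road 1 is not all 1-lam
    push_neg at hall
    obtain ⟨j, hj1, hj2, hjne⟩ := hall
    have hfor : ∀ k : ℕ, j + k ≤ n-1 → c (j+k) ≠ 1 - lam := by
      intro k
      induction k with
      | zero => intro _; simpa using hjne
      | succ k ih =>
        intro hk
        have hprev := ih (by omega)
        have hnode := Hint (j+k+1) (Or.inl ⟨by omega, by omega⟩)
        rw [show j+k+1-1 = j+k by omega] at hnode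
        rcases min_cases (1 - c (j+k)) (c (j+k+1)) with ⟨he, _⟩ | ⟨he, _⟩
        · rw [he] at hnode
          exact absurd (by linarith : c (j+k) = 1 - lam) hprev
        · rw [he] at hnode
          rw [show j + (k+1) = j+k+1 by omega, ← hnode]
          intro hcon; linarith
    have hcn1ne : c (n-1) ≠ 1 - lam := by
      have := hfor (n-1-j) (by omega)
      rwa [show j + (n-1-j) = n-1 by omega] at this
    have hgn : (1 - (a n + a (n+m))) + (q + q') - lam = lam := by
      rcases min_cases ((1 - (a n + a (n+m))) + (q + q') - lam) (1 - c (n-1)) with ⟨he, _⟩ | ⟨he, _⟩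
      · rw [he] at Hn; linarith
      · rw [he] at Hn
        exact absurd (by linarith : c (n-1) = 1 - lam) hcn1ne
    have hqq : q + q' = 2*lam - (1 - (a n + a (n+m))) := by linarith
    have hh1 : a n - q = 1 - 3*lam := by linarith
    rw [hh1] at H1
    rcases min_cases (1 - 3*lam) (c 1) with ⟨he, _⟩ | ⟨he, _⟩
    · -- Case B : lam = 1/4
      rw [he] at H1
      have hl4 : lam = 1/4 := by linarith
      have hC1lb : ((n:ℝ)-1) * lam ≤ C1 := by
        rw [hC1]
        calc ((n:ℝ)-1) * lam = ∑ _i ∈ Icc 1 (n-1), lam := by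
              rw [Finset.sum_const, nsmul_eq_mul, card1]
          _ ≤ ∑ i ∈ Icc 1 (n-1), c i := by
              apply Finset.sum_le_sum
              intro i hi
              rw [Finset.mem_Icc] at hi
              exact hclb i hi.1 hi.2
      have hC1ub : C1 ≤ ((n:ℝ)-1) * (1 - lam) := by
        rw [hC1]
        calc ∑ i ∈ Icc 1 (n-1), c i ≤ ∑ _i ∈ Icc 1 (n-1), (1 - lam) := by
              apply Finset.sum_le_sum
              intro i hi
              rw [Finset.mem_Icc] at hi
              exact hcub i hi.1 hi.2
          _ = ((n:ℝ)-1) * (1 - lam) := by rw [Finset.sum_const, nsmul_eq_mul, card1]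
      have hSeq : S = (n:ℝ) + (m:ℝ) - 3/2 - C1 - C2 := by
        rw [hl4] at hqq
        linarith [hSsplit, hw', hqq]
      rw [hl4] at hC1lb hC1ub
      have hSlb : ((n:ℝ)+(m:ℝ))/4 ≤ S := by
        rw [hSeq, hC2val, hl4]; linarith
      have hSub : S ≤ (3*(n:ℝ)+(m:ℝ)-2)/4 := by
        rw [hSeq, hC2val, hl4]; linarith
      have e1 : (1:ℝ)/4 ≤ S / ((n:ℝ)+(m:ℝ)) := by
        rw [le_div_iff₀ hNpos]; linarith
      have e2 : (1:ℝ)/4 ≤ ((n:ℝ) - S) / ((n:ℝ) - (m:ℝ) + 2) := by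
        rw [le_div_iff₀ hDpos]; linarith
      rw [min_eq_left e2, min_eq_right e1, hl4]
    · -- Case C : lam = (n - S)/(n - m + 2)
      rw [he] at H1
      have hallc : ∀ i : ℕ, 1 ≤ i → i ≤ n-1 → c i = lam := by
        intro i h1 h2
        have haux : ∀ k : ℕ, 1 + k ≤ n-1 → c (1+k) = lam := by
          intro k
          induction k with
          | zero => intro _; simpa using H1.symm
          | succ k ih =>
            intro hk
            have hprev := ih (by omega)
            have hnode := Hint (1+k+1) (Or.inl ⟨by omega, by omega⟩)
            rw [show 1+k+1-1 = 1+k by omega, hprev] at hnode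
            rcases min_cases (1 - lam) (c (1+k+1)) with ⟨he2, _⟩ | ⟨he2, _⟩
            · rw [he2] at hnode; linarith
            · rw [he2] at hnode
              rw [show 1+(k+1) = 1+k+1 by omega]
              exact hnode.symm
        have := haux (i-1) (by omega)
        rwa [show 1+(i-1) = i by omega] at this
      have hC1val : C1 = ((n:ℝ)-1) * lam := by
        have e : ∑ i ∈ Icc 1 (n-1), c i = ∑ _i ∈ Icc 1 (n-1), lam :=
          Finset.sum_congr rfl fun i hi => by
            rw [Finset.mem_Icc] at hi; exact hallc i hi.1 hi.2
        rw [hC1, e, Finset.sum_const, nsmul_eq_mul, card1]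
      rw [hC1val, hC2val] at hw'
      have hSval : ((n:ℝ) - (m:ℝ) + 2) * lam = (n:ℝ) - S := by
        linear_combination hSsplit + hw' - hqq
      have e1 : ((n:ℝ) - S) / ((n:ℝ) - (m:ℝ) + 2) = lam := by
        rw [← hSval]; field_simp
      have e2 : lam ≤ S / ((n:ℝ)+(m:ℝ)) := by
        rw [le_div_iff₀ hNpos]
        have h := arith1 (n:ℝ) lam hn2 hquarter
        linarith only [h, hSval]
      rw [e1, min_eq_right hquarter, min_eq_right e2]

lemma minA (nr mr S : ℝ) (h2n : 2 ≤ nr) (h2m : 2 ≤ mr) (hmn : mr ≤ nr)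
    (hS : S ≤ (nr+mr)/4) :
    min (S/(nr+mr)) (min (1/4) ((nr - S)/(nr - mr + 2))) = S/(nr+mr) := by
  have hN : (0:ℝ) < nr + mr := by linarith
  have hD : (0:ℝ) < nr - mr + 2 := by linarith
  apply min_eq_left
  apply le_min
  · rw [div_le_iff₀ hN]; linarith
  · rw [div_le_div_iff₀ hN hD]
    nlinarith [mul_le_mul_of_nonneg_left hS (show (0:ℝ) ≤ 2*nr+2 by linarith),
      mul_nonneg (show (0:ℝ) ≤ nr+mr by linarith) (show (0:ℝ) ≤ 2*nr-2 by linarith)]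

lemma minB (nr mr S : ℝ) (h2n : 2 ≤ nr) (h2m : 2 ≤ mr) (hmn : mr ≤ nr)
    (h1 : (nr+mr)/4 ≤ S) (h2 : S ≤ (3*nr+mr-2)/4) :
    min (S/(nr+mr)) (min (1/4) ((nr - S)/(nr - mr + 2))) = 1/4 := by
  have hN : (0:ℝ) < nr + mr := by linarith
  have hD : (0:ℝ) < nr - mr + 2 := by linarith
  have e1 : (1:ℝ)/4 ≤ S/(nr+mr) := by rw [le_div_iff₀ hN]; linarith
  have e2 : (1:ℝ)/4 ≤ (nr - S)/(nr - mr + 2) := by rw [le_div_iff₀ hD]; linarith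
  rw [min_eq_left e2, min_eq_right e1]

lemma minC (nr mr S : ℝ) (h2n : 2 ≤ nr) (h2m : 2 ≤ mr) (hmn : mr ≤ nr)
    (h1 : (3*nr+mr-2)/4 ≤ S) :
    min (S/(nr+mr)) (min (1/4) ((nr - S)/(nr - mr + 2))) = (nr - S)/(nr - mr + 2) := by
  have hN : (0:ℝ) < nr + mr := by linarith
  have hD : (0:ℝ) < nr - mr + 2 := by linarith
  have e1 : (nr - S)/(nr - mr + 2) ≤ 1/4 := by rw [div_le_iff₀ hD]; linarith
  have e2 : (nr - S)/(nr - mr + 2) ≤ S/(nr+mr) := by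
    rw [div_le_div_iff₀ hD hN]
    nlinarith [mul_le_mul_of_nonneg_left h1 (show (0:ℝ) ≤ 2*nr+2 by linarith),
      mul_nonneg (sub_nonneg.2 hmn) (show (0:ℝ) ≤ nr by linarith)]
  rw [min_eq_right e1, min_eq_right e2]
lemma exA (n m : ℕ) (hn : 2 ≤ n) (hm : 2 ≤ m) (a : ℕ → ℝ) (lam : ℝ)
    (hl : ((n:ℝ)+(m:ℝ)) * lam = ∑ i ∈ Icc 1 (n+m), a i)
    (h0 : 0 ≤ lam) (hq : lam ≤ 1/4) :
    ∃ x : ℕ → ℝ, EVsol n m a lam x := by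
  refine key n m hn hm a lam (fun _ => 1 - lam) (a n - lam) (a (n+m) - lam) ?_ ?_ ?_ ?_ ?_ ?_
  · intro i _
    show lam = min (1 - (1 - lam)) (1 - lam)
    rw [show (1:ℝ) - (1 - lam) = lam by ring, min_eq_left (by linarith)]
  · show lam = min (a n - (a n - lam)) (1 - lam)
    rw [show a n - (a n - lam) = lam by ring, min_eq_left (by linarith)]
  · show lam = min (a (n+m) - (a (n+m) - lam)) (1 - lam)
    rw [show a (n+m) - (a (n+m) - lam) = lam by ring, min_eq_left (by linarith)]
  · show lam = min ((1 - (a n + a (n+m))) + ((a n - lam) + (a (n+m) - lam)) - lam) (1 - (1 - lam))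
    rw [show (1 - (a n + a (n+m))) + ((a n - lam) + (a (n+m) - lam)) - lam = 1 - 3*lam by ring,
      show (1:ℝ) - (1 - lam) = lam by ring, min_eq_right (by linarith)]
  · show lam = min ((1 - (a n + a (n+m))) + ((a n - lam) + (a (n+m) - lam))) (1 - (1 - lam))
    rw [show (1 - (a n + a (n+m))) + ((a n - lam) + (a (n+m) - lam)) = 1 - 2*lam by ring,
      show (1:ℝ) - (1 - lam) = lam by ring, min_eq_right (by linarith)]
  · show (a n - lam) + (a (n+m) - lam)
      = (∑ i ∈ Icc 1 (n-1), (1 - a i - (1 - lam))) + ∑ i ∈ Icc (n+1) (n+m-1), (1 - a i - (1 - lam))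
    have e : ∀ s : Finset ℕ, ∑ i ∈ s, (1 - a i - (1 - lam))
        = (s.card : ℝ) * lam - ∑ i ∈ s, a i := by
      intro s
      rw [show (fun i => 1 - a i - (1 - lam)) = (fun i => lam - a i) by funext i; ring]
      rw [Finset.sum_sub_distrib, Finset.sum_const, nsmul_eq_mul, mul_comm]
    rw [e, e, cardIcc1 n (by omega), cardIcc2 n m (by omega)]
    linear_combination -split4 a n m hn hm - hl

lemma exC (n m : ℕ) (hn : 2 ≤ n) (hm : 2 ≤ m) (a : ℕ → ℝ) (lam : ℝ)
    (hl : ((n:ℝ)-(m:ℝ)+2) * lam = (n:ℝ) - ∑ i ∈ Icc 1 (n+m), a i)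
    (h0 : 0 ≤ lam) (hq : lam ≤ 1/4) :
    ∃ x : ℕ → ℝ, EVsol n m a lam x := by
  refine key n m hn hm a lam (fun i => if i ≤ n then lam else 1 - lam)
    (2*lam - (1 - (a n + a (n+m))) - (a (n+m) - lam)) (a (n+m) - lam) ?_ ?_ ?_ ?_ ?_ ?_
  · rintro i (⟨hi1, hi2⟩ | ⟨hi1, hi2⟩)
    · show lam = min (1 - (if i - 1 ≤ n then lam else 1 - lam)) (if i ≤ n then lam else 1 - lam)
      rw [if_pos (show i - 1 ≤ n by omega), if_pos (show i ≤ n by omega),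
        min_eq_right (by linarith)]
    · show lam = min (1 - (if i - 1 ≤ n then lam else 1 - lam)) (if i ≤ n then lam else 1 - lam)
      rw [if_neg (show ¬ (i - 1 ≤ n) by omega), if_neg (show ¬ (i ≤ n) by omega),
        show (1:ℝ) - (1 - lam) = lam by ring, min_eq_left (by linarith)]
  · show lam = min (a n - (2*lam - (1 - (a n + a (n+m))) - (a (n+m) - lam)))
      (if 1 ≤ n then lam else 1 - lam)
    rw [if_pos (show 1 ≤ n by omega),
      show a n - (2*lam - (1 - (a n + a (n+m))) - (a (n+m) - lam)) = 1 - 3*lam by ring,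
      min_eq_right (by linarith)]
  · show lam = min (a (n+m) - (a (n+m) - lam)) (if n+1 ≤ n then lam else 1 - lam)
    rw [if_neg (show ¬ (n+1 ≤ n) by omega),
      show a (n+m) - (a (n+m) - lam) = lam by ring, min_eq_left (by linarith)]
  · show lam = min ((1 - (a n + a (n+m)))
        + ((2*lam - (1 - (a n + a (n+m))) - (a (n+m) - lam)) + (a (n+m) - lam)) - lam)
      (1 - (if n - 1 ≤ n then lam else 1 - lam))
    rw [if_pos (show n - 1 ≤ n by omega),
      show (1 - (a n + a (n+m)))
        + ((2*lam - (1 - (a n + a (n+m))) - (a (n+m) - lam)) + (a (n+m) - lam)) - lam = lam by ring,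
      min_eq_left (by linarith)]
  · show lam = min ((1 - (a n + a (n+m)))
        + ((2*lam - (1 - (a n + a (n+m))) - (a (n+m) - lam)) + (a (n+m) - lam)))
      (1 - (if n + m - 1 ≤ n then lam else 1 - lam))
    rw [if_neg (show ¬ (n + m - 1 ≤ n) by omega),
      show (1 - (a n + a (n+m)))
        + ((2*lam - (1 - (a n + a (n+m))) - (a (n+m) - lam)) + (a (n+m) - lam)) = 2*lam by ring,
      show (1:ℝ) - (1 - lam) = lam by ring, min_eq_right (by linarith)]
  · show (2*lam - (1 - (a n + a (n+m))) - (a (n+m) - lam)) + (a (n+m) - lam)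
      = (∑ i ∈ Icc 1 (n-1), (1 - a i - (if i ≤ n then lam else 1 - lam)))
        + ∑ i ∈ Icc (n+1) (n+m-1), (1 - a i - (if i ≤ n then lam else 1 - lam))
    have e1 : ∑ i ∈ Icc 1 (n-1), (1 - a i - (if i ≤ n then lam else 1 - lam))
        = ((n:ℝ) - 1) * (1 - lam) - ∑ i ∈ Icc 1 (n-1), a i := by
      have ec : ∑ i ∈ Icc 1 (n-1), (1 - a i - (if i ≤ n then lam else 1 - lam))
          = ∑ i ∈ Icc 1 (n-1), (1 - a i - lam) :=
        Finset.sum_congr rfl fun i hi => by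
          rw [Finset.mem_Icc] at hi
          rw [if_pos (show i ≤ n by omega)]
      rw [ec]
      rw [show (fun i => 1 - a i - lam) = (fun i => (1 - lam) - a i) by funext i; ring]
      rw [Finset.sum_sub_distrib, Finset.sum_const, nsmul_eq_mul, cardIcc1 n (by omega), mul_comm]
    have e2 : ∑ i ∈ Icc (n+1) (n+m-1), (1 - a i - (if i ≤ n then lam else 1 - lam))
        = ((m:ℝ) - 1) * lam - ∑ i ∈ Icc (n+1) (n+m-1), a i := by
      have ec : ∑ i ∈ Icc (n+1) (n+m-1), (1 - a i - (if i ≤ n then lam else 1 - lam))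
          = ∑ i ∈ Icc (n+1) (n+m-1), (1 - a i - (1 - lam)) :=
        Finset.sum_congr rfl fun i hi => by
          rw [Finset.mem_Icc] at hi
          rw [if_neg (show ¬ (i ≤ n) by omega)]
      rw [ec]
      rw [show (fun i => 1 - a i - (1 - lam)) = (fun i => lam - a i) by funext i; ring]
      rw [Finset.sum_sub_distrib, Finset.sum_const, nsmul_eq_mul, cardIcc2 n m (by omega), mul_comm]
    rw [e1, e2]
    linear_combination hl - split4 a n m hn hm

lemma exB (n m : ℕ) (hn : 2 ≤ n) (hm : 2 ≤ m) (a : ℕ → ℝ)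
    (hS1 : ((n:ℝ)+(m:ℝ))/4 < ∑ i ∈ Icc 1 (n+m), a i)
    (hS2 : (∑ i ∈ Icc 1 (n+m), a i) ≤ (3*(n:ℝ)+(m:ℝ)-2)/4) :
    ∃ x : ℕ → ℝ, EVsol n m a (1/4) x := by
  have hn2 : (2:ℝ) ≤ (n:ℝ) := by exact_mod_cast hn
  have hm2 : (2:ℝ) ≤ (m:ℝ) := by exact_mod_cast hm
  set S := ∑ i ∈ Icc 1 (n+m), a i with hSdef
  obtain ⟨u, hu⟩ : ∃ u : ℝ, u = 2*((n:ℝ) + (m:ℝ) - 3/2 - S - 3*((m:ℝ)-1)/4) - ((n:ℝ)-1)/2 :=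
    ⟨_, rfl⟩
  have hu0 : 0 ≤ u := by rw [hu]; linarith
  have huN : u < (n:ℝ) - 1 := by rw [hu]; linarith
  obtain ⟨k, hk1, hk2⟩ : ∃ k : ℕ, (k:ℝ) ≤ u ∧ u < (k:ℝ) + 1 :=
    ⟨⌊u⌋₊, Nat.floor_le hu0, Nat.lt_floor_add_one u⟩
  have hkn : k + 1 < n := by
    exact_mod_cast (by push_cast; linarith : ((k+1:ℕ):ℝ) < (n:ℝ))
  obtain ⟨θ, hθ⟩ : ∃ θ : ℝ, θ = u/2 - (k:ℝ)/2 + 1/4 := ⟨_, rfl⟩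
  have hθ1 : 1/4 ≤ θ := by rw [hθ]; linarith
  have hθ2 : θ ≤ 3/4 := by rw [hθ]; linarith
  obtain ⟨c, hc⟩ : ∃ c : ℕ → ℝ, c = fun i => if n+1 ≤ i then (3:ℝ)/4
      else if i ≤ k then 3/4 else if i = k+1 then θ else 1/4 := ⟨_, rfl⟩
  have hclb : ∀ i : ℕ, (1:ℝ)/4 ≤ c i := by
    intro i; simp only [hc]; split_ifs <;> linarith
  have hcub : ∀ i : ℕ, c i ≤ 3/4 := by
    intro i; simp only [hc]; split_ifs <;> linarith
  refine key n m hn hm a (1/4) c (a n - 1/4) (a (n+m) - 1/4) ?_ ?_ ?_ ?_ ?_ ?_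
  · rintro i (⟨hi1, hi2⟩ | ⟨hi1, hi2⟩)
    · by_cases hik : i ≤ k+1
      · have e1 : c (i-1) = 3/4 := by
          simp only [hc]
          rw [if_neg (show ¬ (n+1 ≤ i-1) by omega), if_pos (show i-1 ≤ k by omega)]
        rw [e1, show (1:ℝ) - 3/4 = 1/4 by norm_num, min_eq_left (hclb i)]
      · have e2 : c i = 1/4 := by
          simp only [hc]
          rw [if_neg (show ¬ (n+1 ≤ i) by omega), if_neg (show ¬ (i ≤ k) by omega),
            if_neg (show ¬ (i = k+1) by omega)]
        rw [e2, min_eq_right (by have := hcub (i-1); linarith)]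
    · have e1 : c (i-1) = 3/4 := by
        simp only [hc]; rw [if_pos (show n+1 ≤ i-1 by omega)]
      have e2 : c i = 3/4 := by
        simp only [hc]; rw [if_pos (show n+1 ≤ i by omega)]
      rw [e1, e2]
      norm_num
  · rw [show a n - (a n - 1/4) = 1/4 by ring, min_eq_left (hclb 1)]
  · have e2 : c (n+1) = 3/4 := by
      simp only [hc]; rw [if_pos le_rfl]
    rw [show a (n+m) - (a (n+m) - 1/4) = 1/4 by ring, e2, min_eq_left (by norm_num)]
  · rw [show (1 - (a n + a (n+m))) + ((a n - 1/4) + (a (n+m) - 1/4)) - 1/4 = (1:ℝ)/4 by ring,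
      min_eq_left (by have := hcub (n-1); linarith)]
  · have e2 : c (n+m-1) = 3/4 := by
      simp only [hc]; rw [if_pos (show n+1 ≤ n+m-1 by omega)]
    rw [show (1 - (a n + a (n+m))) + ((a n - 1/4) + (a (n+m) - 1/4)) = (1:ℝ)/2 by ring, e2]
    norm_num
  · -- Hw
    have d1 : (∑ i ∈ Ico 1 (k+1), c i) + ∑ i ∈ Ico (k+1) (k+2), c i = ∑ i ∈ Ico 1 (k+2), c i :=
      Finset.sum_Ico_consecutive c (by omega) (by omega)
    have d2 : (∑ i ∈ Ico 1 (k+2), c i) + ∑ i ∈ Ico (k+2) n, c i = ∑ i ∈ Ico 1 n, c i :=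
      Finset.sum_Ico_consecutive c (by omega) (by omega)
    have i1 : Ico 1 (k+1) = Icc 1 k := Finset.Ico_add_one_right_eq_Icc 1 k
    have i2 : ∑ i ∈ Ico (k+1) (k+2), c i = c (k+1) := by simp
    have i3 : Ico 1 n = Icc 1 (n-1) := by rw [← Finset.Ico_add_one_right_eq_Icc]; congr 1; omega
    have i4 : Ico (k+2) n = Icc (k+2) (n-1) := by rw [← Finset.Ico_add_one_right_eq_Icc]; congr 1; omega
    have v1 : ∑ i ∈ Icc 1 k, c i = (k:ℝ) * (3/4) := by
      have e : ∑ i ∈ Icc 1 k, c i = ∑ _i ∈ Icc 1 k, (3:ℝ)/4 :=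
        Finset.sum_congr rfl fun i hi => by
          rw [Finset.mem_Icc] at hi
          simp only [hc]
          rw [if_neg (show ¬ (n+1 ≤ i) by omega), if_pos hi.2]
      rw [e, Finset.sum_const, nsmul_eq_mul]
      congr 1
      rw [Nat.card_Icc]
      norm_num
    have v2 : c (k+1) = θ := by
      simp only [hc]
      rw [if_neg (show ¬ (n+1 ≤ k+1) by omega), if_neg (show ¬ (k+1 ≤ k) by omega)]
      simp
    have v3 : ∑ i ∈ Icc (k+2) (n-1), c i = ((n:ℝ) - 2 - (k:ℝ)) * (1/4) := by
      have e : ∑ i ∈ Icc (k+2) (n-1), c i = ∑ _i ∈ Icc (k+2) (n-1), (1:ℝ)/4 :=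
        Finset.sum_congr rfl fun i hi => by
          rw [Finset.mem_Icc] at hi
          simp only [hc]
          rw [if_neg (show ¬ (n+1 ≤ i) by omega), if_neg (show ¬ (i ≤ k) by omega),
            if_neg (show ¬ (i = k+1) by omega)]
      rw [e, Finset.sum_const, nsmul_eq_mul]
      congr 1
      have hcard : (Icc (k+2) (n-1)).card = n - 2 - k := by rw [Nat.card_Icc]; omega
      rw [hcard, Nat.cast_sub (by omega : k ≤ n - 2), Nat.cast_sub (by omega : 2 ≤ n)]
      norm_num
    have hC1 : ∑ i ∈ Icc 1 (n-1), c i = (k:ℝ) * (3/4) + (θ + ((n:ℝ) - 2 - (k:ℝ)) * (1/4)) := by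
      rw [← i3, ← d2, ← d1, i1, i2, i4, v1, v2, v3]
      ring
    have hsum1 : ∑ i ∈ Icc 1 (n-1), (1 - a i - c i)
        = ((n:ℝ) - 1) - (∑ i ∈ Icc 1 (n-1), a i) - ∑ i ∈ Icc 1 (n-1), c i := by
      rw [Finset.sum_sub_distrib, Finset.sum_sub_distrib, Finset.sum_const, nsmul_eq_mul,
        mul_one, cardIcc1 n (by omega)]
    have hsum2 : ∑ i ∈ Icc (n+1) (n+m-1), (1 - a i - c i)
        = ((m:ℝ) - 1) - (∑ i ∈ Icc (n+1) (n+m-1), a i) - ∑ i ∈ Icc (n+1) (n+m-1), c i := by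
      rw [Finset.sum_sub_distrib, Finset.sum_sub_distrib, Finset.sum_const, nsmul_eq_mul,
        mul_one, cardIcc2 n m (by omega)]
    have hC2 : ∑ i ∈ Icc (n+1) (n+m-1), c i = ((m:ℝ) - 1) * (3/4) := by
      have e : ∑ i ∈ Icc (n+1) (n+m-1), c i = ∑ _i ∈ Icc (n+1) (n+m-1), (3:ℝ)/4 :=
        Finset.sum_congr rfl fun i hi => by
          rw [Finset.mem_Icc] at hi
          simp only [hc]
          rw [if_pos (show n+1 ≤ i by omega)]
      rw [e, Finset.sum_const, nsmul_eq_mul, cardIcc2 n m (by omega)]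
    rw [hsum1, hsum2, hC1, hC2, hθ, hu]
    linear_combination -split4 a n m hn hm

theorem stmt17 (n m : ℕ) (hn : 2 ≤ n) (hm : 2 ≤ m) (a : ℕ → ℝ)
    (ha : ∀ i : ℕ, 1 ≤ i → i ≤ n + m → 0 ≤ a i ∧ a i ≤ 1)
    (hprio : a n + a (n + m) ≤ 1)
    (d r ρ : ℝ) (hd : d = (∑ i ∈ Finset.Icc 1 (n + m), a i) / ((n : ℝ) + (m : ℝ) - 1))
    (hr : r = (n : ℝ) / ((n : ℝ) + (m : ℝ) - 1))
    (hρ : ρ = 1 / ((n : ℝ) + (m : ℝ) - 1))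
    (hr2 : 1 / 2 < r) (hd0 : 0 < d) (hdr : d < r)
    (lam : ℝ)
    (hlam : lam = min (d / (1 + ρ)) (min (1 / 4) ((r - d) / (2 * r - 1 + ρ)))) :
    0 < lam ∧ (∃ x : ℕ → ℝ, EVsol n m a lam x) ∧
      ∀ lam' : ℝ, 0 < lam' →
        (∃ x : ℕ → ℝ, EVsol n m a lam' x) → lam' = lam := by
  have hn2 : (2:ℝ) ≤ (n:ℝ) := by exact_mod_cast hn
  have hm2 : (2:ℝ) ≤ (m:ℝ) := by exact_mod_cast hm
  have hN1 : (0:ℝ) < (n:ℝ)+(m:ℝ)-1 := by linarith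
  set S := ∑ i ∈ Finset.Icc 1 (n+m), a i with hSdef
  have hmn : m ≤ n := by
    rw [hr, lt_div_iff₀ hN1] at hr2
    have h1 : (m:ℝ) < (n:ℝ) + 1 := by linarith
    have h2 : m < n + 1 := by exact_mod_cast h1
    omega
  have hmn' : (m:ℝ) ≤ (n:ℝ) := by exact_mod_cast hmn
  have hNpos : (0:ℝ) < (n:ℝ)+(m:ℝ) := by linarith
  have hDpos : (0:ℝ) < (n:ℝ)-(m:ℝ)+2 := by linarith
  have hS0 : 0 < S := by
    rw [hd] at hd0
    rcases div_pos_iff.mp hd0 with ⟨h1, _⟩ | ⟨_, h2⟩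
    · exact h1
    · linarith
  have hSn : S < (n:ℝ) := by
    rw [hd, hr, div_lt_div_iff₀ hN1 hN1] at hdr
    exact lt_of_mul_lt_mul_right hdr (le_of_lt hN1)
  have hlamM : lam = min (S/((n:ℝ)+(m:ℝ))) (min (1/4) (((n:ℝ)-S)/((n:ℝ)-(m:ℝ)+2))) := by
    rw [hlam]
    have e0 : d / (1+ρ) = S/((n:ℝ)+(m:ℝ)) := by
      rw [hd, hρ]
      have hden : (0:ℝ) < 1 + 1/((n:ℝ)+(m:ℝ)-1) := by
        have := div_pos one_pos hN1
        linarith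
      rw [div_eq_div_iff hden.ne' hNpos.ne']
      field_simp
      try ring
    have e1 : r - d = ((n:ℝ)-S)/((n:ℝ)+(m:ℝ)-1) := by
      rw [hr, hd]; ring
    have e2 : 2*r - 1 + ρ = ((n:ℝ)-(m:ℝ)+2)/((n:ℝ)+(m:ℝ)-1) := by
      rw [hr, hρ]
      field_simp
      try ring
    rw [e0, e1, e2]
    congr 2
    field_simp
  have hpos : 0 < lam := by
    rw [hlamM]
    exact lt_min (div_pos hS0 hNpos) (lt_min (by norm_num) (div_pos (by linarith) hDpos))
  refine ⟨hpos, ?_, ?_⟩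
  · -- existence
    rcases le_or_gt S (((n:ℝ)+(m:ℝ))/4) with hc1 | hc1
    · have hlv : lam = S/((n:ℝ)+(m:ℝ)) := by
        rw [hlamM, minA _ _ _ hn2 hm2 hmn' hc1]
      refine exA n m hn hm a lam ?_ ?_ ?_
      · rw [hlv]; field_simp; rfl
      · rw [hlv]; positivity
      · rw [hlv, div_le_iff₀ hNpos]; linarith
    · rcases le_or_gt S ((3*(n:ℝ)+(m:ℝ)-2)/4) with hc2 | hc2
      · have hlv : lam = 1/4 := by
          rw [hlamM, minB _ _ _ hn2 hm2 hmn' (le_of_lt hc1) hc2]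
        rw [hlv]
        exact exB n m hn hm a hc1 hc2
      · have hlv : lam = ((n:ℝ)-S)/((n:ℝ)-(m:ℝ)+2) := by
          rw [hlamM, minC _ _ _ hn2 hm2 hmn' (le_of_lt hc2)]
        refine exC n m hn hm a lam ?_ ?_ ?_
        · rw [hlv]; field_simp; rfl
        · rw [hlv]
          exact div_nonneg (by linarith) (le_of_lt hDpos)
        · rw [hlv, div_le_iff₀ hDpos]; linarith
  · -- uniqueness
    rintro lam' hpos' ⟨x, hev⟩
    obtain ⟨c, q, q', Hint, H1, Hn1, Hn, Hnm, Hw⟩ := extract n m hn hm a lam' x hev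
    have hval := uniq n m hn hm hmn a lam' hpos' c q q' Hint H1 Hn1 Hn Hnm Hw
    rw [hval]
    exact hlamM.symm
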